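/- Let G be a group. For g, h ∈ G write g^h := h^{-1}gh and [g,h] := ghg^{-1}h^{-1}. Say a pair (a,b) ∈ G × G is reducible to (a',b') by g ∈ G if a' = [a^{-1},g] and b' = [g,b]. Suppose (a_1,b_1), (a_2,b_2) ∈ G × G and g_1, …, g_n ∈ G are such that (a_1,b_1) is reducible to (a_2,b_2) by the successive steps g_1, …, g_n (i.e., there is a chain of pairs starting at (a_1,b_1) and ending at (a_2,b_2) in which each pair is reducible to the next by the corresponding g_i). Let H be the subgroup of G generated by {a_1, g_1, …, g_n}. Then a_2·b_2 can be written as a product of 2^n elements, each of which is of the form c^h with c ∈ {a_1b_1, (a_1b_1)^{-1}} and h ∈ H. -/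

import Mathlib

private lemma conj_prod' {G : Type*} [Group G] (k : G) (L : List G) :
    (L.map (fun c => k⁻¹ * c * k)).prod = k⁻¹ * L.prod * k := by
  induction L with
  | nil => simp
  | cons x L ih => simp [ih]; group

/-- Lemma on simultaneous reduction in groups: if `(a 0, b 0)` is reducible to
`(a n, b n)` by successive steps `g 0, …, g (n-1)` (where reducibility of `(a,b)`
to `(a',b')` by `g` means `a' = [a⁻¹, g]` and `b' = [g, b]`), then
`a n * b n` is a product of `2^n` `H`-conjugates of `a 0 * b 0` and its inverse,
where `H` is the subgroup generated by `{a 0, g 0, …, g (n-1)}`. -/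
theorem stmt0 {G : Type*} [Group G] (n : ℕ) (a b : Fin (n + 1) → G) (g : Fin n → G)
    (hstep : ∀ i : Fin n,
      a i.succ = (a i.castSucc)⁻¹ * g i * (a i.castSucc) * (g i)⁻¹ ∧
      b i.succ = g i * b i.castSucc * (g i)⁻¹ * (b i.castSucc)⁻¹) :
    ∃ c : Fin (2 ^ n) → G,
      (∀ p, ∃ h ∈ Subgroup.closure ({a 0} ∪ Set.range g),
        c p = h⁻¹ * (a 0 * b 0) * h ∨ c p = h⁻¹ * (a 0 * b 0)⁻¹ * h) ∧
      (List.ofFn c).prod = a (Fin.last n) * b (Fin.last n) := by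
  set H := Subgroup.closure ({a 0} ∪ Set.range g) with hH
  set x := a 0 * b 0 with hx
  have hgH : ∀ i : Fin n, g i ∈ H :=
    fun i => Subgroup.subset_closure (Or.inr ⟨i, rfl⟩)
  have key : ∀ i : Fin (n + 1), a i ∈ H ∧ ∃ L : List G,
      L.length = 2 ^ (i : ℕ) ∧
      (∀ c ∈ L, ∃ h ∈ H, c = h⁻¹ * x * h ∨ c = h⁻¹ * x⁻¹ * h) ∧
      L.prod = a i * b i := by
    intro i
    induction i using Fin.induction with
    | zero =>
      refine ⟨Subgroup.subset_closure (Or.inl rfl), [x], by simp,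
        fun c hc => ⟨1, one_mem _, ?_⟩, by simp [hx]⟩
      simp at hc; simp [hc]
    | succ i ih =>
      obtain ⟨haH, L, hlen, hmem, hprod⟩ := ih
      have hstep' := hstep i
      have haH' : a i.succ ∈ H := by
        rw [hstep'.1]
        exact mul_mem (mul_mem (mul_mem (inv_mem haH) (hgH i)) haH) (inv_mem (hgH i))
      set k1 := (g i)⁻¹ * a i.castSucc with hk1
      set k2 := a i.castSucc with hk2
      have hk1H : k1 ∈ H := mul_mem (inv_mem (hgH i)) haH
      have hk2H : k2 ∈ H := haH
      refine ⟨haH', L.map (fun c => k1⁻¹ * c * k1) ++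
        (L.reverse.map (fun c => k2⁻¹ * c⁻¹ * k2)), ?_, ?_, ?_⟩
      · simp [hlen, pow_succ]; ring
      · intro c hc
        simp only [List.mem_append, List.mem_map, List.mem_reverse] at hc
        rcases hc with ⟨d, hd, rfl⟩ | ⟨d, hd, rfl⟩
        · obtain ⟨h, hh, hcase⟩ := hmem d hd
          refine ⟨h * k1, mul_mem hh hk1H, ?_⟩
          rcases hcase with rfl | rfl
          · left; group
          · right; group
        · obtain ⟨h, hh, hcase⟩ := hmem d hd
          refine ⟨h * k2, mul_mem hh hk2H, ?_⟩
          rcases hcase with rfl | rfl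
          · right; group
          · left; group
      · have h1 : (L.map (fun c => k1⁻¹ * c * k1)).prod = k1⁻¹ * L.prod * k1 :=
          conj_prod' k1 L
        have h2 : (L.reverse.map (fun c => k2⁻¹ * c⁻¹ * k2)).prod
            = k2⁻¹ * L.prod⁻¹ * k2 := by
          have : L.reverse.map (fun c => k2⁻¹ * c⁻¹ * k2)
              = (L.reverse.map Inv.inv).map (fun c => k2⁻¹ * c * k2) := by
            simp [List.map_map, Function.comp]
          rw [this, conj_prod' k2, List.map_reverse, ← List.prod_inv_reverse]
        rw [List.prod_append, h1, h2, hprod, hstep'.1, hstep'.2, hk1, hk2]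
        group
  obtain ⟨-, L, hlen, hmem, hprod⟩ := key (Fin.last n)
  simp only [Fin.val_last] at hlen
  have hofn : ∀ (m : ℕ) (hm : L.length = m),
      List.ofFn (fun p : Fin m => L.get (Fin.cast hm.symm p)) = L := by
    intro m hm; subst hm; exact List.ofFn_get L
  refine ⟨fun p => L.get (Fin.cast hlen.symm p), fun p => ?_, by
    rw [hofn (2 ^ n) hlen, hprod]⟩
  exact hmem _ (L.get_mem _)
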